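/- Let n ≥ 2 and let f : ℂ → SL_n(ℂ) be an algebraic embedding whose first-column projection satisfies π₁(f(t)) = (1, 0, ..., 0, t)ᵀ for all t ∈ ℂ. Then there is an algebraic automorphism ψ of SL_n(ℂ) such that ψ(f(t)) = E_{n1}(t) for all t, where E_{n1}(t) is the elementary matrix with lower-left entry t. Concretely, ψ(X) = X · f(x_{n1})⁻¹ · E_{n1}(x_{n1}) works, where x_{n1} is the (n,1)-entry of X. -/

import Mathlib

open Matrix

noncomputable section

abbrev SL (n : ℕ) := Matrix.SpecialLinearGroup (Fin n) ℂ

/-- A self-map of `SL n ℂ` is regular (algebraic) if each matrix entry of the image is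
given by a polynomial in the matrix entries of the argument. -/
def SLRegular {n : ℕ} (φ : SL n → SL n) : Prop :=
  ∀ i j : Fin n, ∃ P : MvPolynomial (Fin n × Fin n) ℂ,
    ∀ X : SL n, (φ X : Matrix (Fin n) (Fin n) ℂ) i j =
      MvPolynomial.eval (fun kl => (X : Matrix (Fin n) (Fin n) ℂ) kl.1 kl.2) P

/-- An algebraic automorphism of `SL n ℂ`: a regular map with a regular inverse. -/
def SLAlgAut {n : ℕ} (φ : SL n → SL n) : Prop :=
  SLRegular φ ∧ ∃ ψ : SL n → SL n, SLRegular ψ ∧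
    Function.LeftInverse ψ φ ∧ Function.RightInverse ψ φ

lemma reg {n : ℕ} (N : Matrix (Fin n) (Fin n) (Polynomial ℂ)) (φ : SL n → SL n) (a b : Fin n)
    (h : ∀ X : SL n, (φ X : Matrix (Fin n) (Fin n) ℂ) =
      (X : Matrix (Fin n) (Fin n) ℂ) *
        N.map (Polynomial.eval ((X : Matrix (Fin n) (Fin n) ℂ) a b))) : SLRegular φ := by
  intro i j
  refine ⟨∑ k : Fin n, MvPolynomial.X (i, k) * Polynomial.aeval (MvPolynomial.X (a, b)) (N k j),
    fun X => ?_⟩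
  rw [h, Matrix.mul_apply, map_sum]
  refine Finset.sum_congr rfl fun k _ => ?_
  rw [_root_.map_mul, MvPolynomial.eval_X, Matrix.map_apply]
  congr 1
  rw [Polynomial.aeval_def, Polynomial.eval₂_eq_sum, Polynomial.eval_eq_sum]
  simp [Polynomial.sum, map_sum]

lemma map_one_add_std {n : ℕ} (iN i0 : Fin n) (q : Polynomial ℂ) (t : ℂ) :
    ((1 : Matrix (Fin n) (Fin n) (Polynomial ℂ)) + Matrix.single iN i0 q).map
      (Polynomial.eval t)
      = (1 : Matrix (Fin n) (Fin n) ℂ) + Matrix.single iN i0 (q.eval t) := by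
  ext a b
  simp only [Matrix.map_apply, Matrix.add_apply]
  by_cases h : iN = a ∧ i0 = b
  · obtain ⟨rfl, rfl⟩ := h
    simp [Matrix.one_apply, apply_ite (Polynomial.eval t)]
  · rw [Matrix.single_apply_of_ne _ _ _ _ _ h, Matrix.single_apply_of_ne _ _ _ _ _ h]
    simp [Matrix.one_apply, apply_ite (Polynomial.eval t)]

theorem stmt_8 (n : ℕ) (hn : 2 ≤ n) (f : ℂ → SL n)
    (P : Fin n → Fin n → Polynomial ℂ)
    (hP : ∀ (t : ℂ) (i j : Fin n), (f t : Matrix (Fin n) (Fin n) ℂ) i j = (P i j).eval t)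
    (hinj : Function.Injective f)
    (hproper : IsProperMap (fun t : ℂ => (f t : Matrix (Fin n) (Fin n) ℂ)))
    (himm : ∀ t : ℂ, Matrix.of (fun i j : Fin n => (P i j).derivative.eval t) ≠ 0)
    (hcol1 : ∀ t : ℂ, (f t : Matrix (Fin n) (Fin n) ℂ) ⟨0, by omega⟩ ⟨0, by omega⟩ = 1)
    (hcoln : ∀ t : ℂ, (f t : Matrix (Fin n) (Fin n) ℂ) ⟨n - 1, by omega⟩ ⟨0, by omega⟩ = t)
    (hcol0 : ∀ (t : ℂ) (i : Fin n), (i : ℕ) ≠ 0 → (i : ℕ) ≠ n - 1 →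
      (f t : Matrix (Fin n) (Fin n) ℂ) i ⟨0, by omega⟩ = 0) :
    ∃ ψ : SL n → SL n, SLAlgAut ψ ∧
      (∀ X : SL n, (ψ X : Matrix (Fin n) (Fin n) ℂ) =
        (X : Matrix (Fin n) (Fin n) ℂ) *
          (((f ((X : Matrix (Fin n) (Fin n) ℂ) ⟨n - 1, by omega⟩ ⟨0, by omega⟩))⁻¹ :
              SL n) : Matrix (Fin n) (Fin n) ℂ) *
          ((1 : Matrix (Fin n) (Fin n) ℂ) +
            Matrix.single ⟨n - 1, by omega⟩ ⟨0, by omega⟩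
              ((X : Matrix (Fin n) (Fin n) ℂ) ⟨n - 1, by omega⟩ ⟨0, by omega⟩))) ∧
      ∀ t : ℂ, (ψ (f t) : Matrix (Fin n) (Fin n) ℂ) =
        (1 : Matrix (Fin n) (Fin n) ℂ) +
          Matrix.single ⟨n - 1, by omega⟩ ⟨0, by omega⟩ t := by
  have h0 : 0 < n := by omega
  have h1 : n - 1 < n := by omega
  set iN : Fin n := ⟨n - 1, h1⟩ with hiN
  set i0 : Fin n := ⟨0, h0⟩ with hi0
  have hne : iN ≠ i0 := by
    simp only [hiN, hi0, ne_eq, Fin.mk.injEq]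
    omega
  set Esl : ℂ → SL n := fun t =>
    ⟨Matrix.transvection iN i0 t, Matrix.det_transvection_of_ne iN i0 hne t⟩ with hEsl
  have hEcoe : ∀ t : ℂ, (Esl t : Matrix (Fin n) (Fin n) ℂ)
      = (1 : Matrix (Fin n) (Fin n) ℂ) + Matrix.single iN i0 t := fun t => rfl
  have hEslmul : ∀ s t : ℂ, Esl s * Esl t = Esl (s + t) := by
    intro s t
    apply Subtype.ext
    rw [Matrix.SpecialLinearGroup.coe_mul]
    exact Matrix.transvection_mul_transvection_same iN i0 hne s t
  have hEsl0 : Esl 0 = 1 := by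
    apply Subtype.ext
    simp [hEsl]
  set x : SL n → ℂ := fun X => (X : Matrix (Fin n) (Fin n) ℂ) iN i0 with hx
  set ψ : SL n → SL n := fun X => X * (f (x X))⁻¹ * Esl (x X) with hψ
  set ψ' : SL n → SL n := fun X => X * Esl (-(x X)) * f (x X) with hψ'
  -- the first columns of `E t` and `f t` agree
  have hcolE : ∀ (t : ℂ) (k : Fin n),
      ((1 : Matrix (Fin n) (Fin n) ℂ) + Matrix.single iN i0 t) k i0
        = (f t : Matrix (Fin n) (Fin n) ℂ) k i0 := by
    intro t k
    by_cases hk0 : k = i0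
    · subst hk0
      rw [show (f t : Matrix (Fin n) (Fin n) ℂ) i0 i0 = 1 from hcol1 t,
        Matrix.add_apply, Matrix.single_apply_of_ne _ _ _ _ _ (fun h => hne h.1)]
      simp [Matrix.one_apply]
    · by_cases hkN : k = iN
      · subst hkN
        rw [show (f t : Matrix (Fin n) (Fin n) ℂ) iN i0 = t from hcoln t, Matrix.add_apply]
        simp [Matrix.one_apply, hne]
      · rw [show (f t : Matrix (Fin n) (Fin n) ℂ) k i0 = 0 from
          hcol0 t k (by simpa [hi0, Fin.ext_iff] using hk0)
            (by simpa [hiN, Fin.ext_iff] using hkN),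
          Matrix.add_apply, Matrix.single_apply_of_ne _ _ _ _ _ (fun h => hkN h.1.symm)]
        simp [Matrix.one_apply, hk0]
  -- first column of (f t)⁻¹ * E t is e₀
  have hA : ∀ (t : ℂ) (l : Fin n),
      ((((f t)⁻¹ : SL n) : Matrix (Fin n) (Fin n) ℂ) *
        ((1 : Matrix (Fin n) (Fin n) ℂ) + Matrix.single iN i0 t)) l i0
        = if l = i0 then 1 else 0 := by
    intro t l
    rw [Matrix.mul_apply]
    rw [Finset.sum_congr rfl fun k _ => by rw [hcolE t k], ← Matrix.mul_apply,
      ← Matrix.SpecialLinearGroup.coe_mul, inv_mul_cancel]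
    simp [Matrix.one_apply]
  -- first column of E (-t) * f t is e₀
  have hB : ∀ (t : ℂ) (l : Fin n),
      ((Esl (-t) : Matrix (Fin n) (Fin n) ℂ) * (f t : Matrix (Fin n) (Fin n) ℂ)) l i0
        = if l = i0 then 1 else 0 := by
    intro t l
    by_cases hlN : l = iN
    · subst hlN
      rw [show (Esl (-t) : Matrix (Fin n) (Fin n) ℂ) = Matrix.transvection iN i0 (-t) from rfl,
        Matrix.transvection_mul_apply_same, show (f t : Matrix (Fin n) (Fin n) ℂ) iN i0 = t from
          hcoln t, show (f t : Matrix (Fin n) (Fin n) ℂ) i0 i0 = 1 from hcol1 t]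
      simp [hne]
    · rw [show (Esl (-t) : Matrix (Fin n) (Fin n) ℂ) = Matrix.transvection iN i0 (-t) from rfl,
        Matrix.transvection_mul_apply_of_ne _ _ _ _ hlN]
      by_cases hl0 : l = i0
      · subst hl0
        rw [show (f t : Matrix (Fin n) (Fin n) ℂ) i0 i0 = 1 from hcol1 t]
        simp
      · rw [show (f t : Matrix (Fin n) (Fin n) ℂ) l i0 = 0 from
          hcol0 t l (by simpa [hi0, Fin.ext_iff] using hl0)
            (by simpa [hiN, Fin.ext_iff] using hlN)]
        simp [hl0]
  -- multiplying by a matrix with first column e₀ preserves the first column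
  have key : ∀ (X g : SL n), (∀ l : Fin n, (g : Matrix (Fin n) (Fin n) ℂ) l i0
      = if l = i0 then 1 else 0) → ((X * g : SL n) : Matrix (Fin n) (Fin n) ℂ) iN i0 = x X := by
    intro X g hg
    rw [Matrix.SpecialLinearGroup.coe_mul, Matrix.mul_apply]
    simp [hg, mul_ite]
    rfl
  have hψfix : ∀ X : SL n, x (ψ X) = x X := by
    intro X
    have h1 : ψ X = X * ((f (x X))⁻¹ * Esl (x X)) := by rw [hψ]; simp [mul_assoc]
    rw [show x (ψ X) = ((ψ X : SL n) : Matrix (Fin n) (Fin n) ℂ) iN i0 from rfl, h1]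
    refine key X _ fun l => ?_
    rw [Matrix.SpecialLinearGroup.coe_mul, hEcoe]
    exact hA (x X) l
  have hψ'fix : ∀ X : SL n, x (ψ' X) = x X := by
    intro X
    have h1 : ψ' X = X * (Esl (-(x X)) * f (x X)) := by rw [hψ']; simp [mul_assoc]
    rw [show x (ψ' X) = ((ψ' X : SL n) : Matrix (Fin n) (Fin n) ℂ) iN i0 from rfl, h1]
    refine key X _ fun l => ?_
    rw [Matrix.SpecialLinearGroup.coe_mul]
    exact hB (x X) l
  have hleft : Function.LeftInverse ψ' ψ := by
    intro X
    show ψ X * Esl (-(x (ψ X))) * f (x (ψ X)) = X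
    rw [hψfix X, show ψ X = X * (f (x X))⁻¹ * Esl (x X) from rfl,
      mul_assoc (X * (f (x X))⁻¹), hEslmul, add_neg_cancel, hEsl0, mul_one, mul_assoc,
      inv_mul_cancel, mul_one]
  have hright : Function.RightInverse ψ' ψ := by
    intro X
    show ψ' X * (f (x (ψ' X)))⁻¹ * Esl (x (ψ' X)) = X
    rw [hψ'fix X, show ψ' X = X * Esl (-(x X)) * f (x X) from rfl,
      mul_assoc (X * Esl (-(x X))), mul_inv_cancel, mul_one, mul_assoc, hEslmul,
      neg_add_cancel, hEsl0, mul_one]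
  set Mf : Matrix (Fin n) (Fin n) (Polynomial ℂ) := Matrix.of fun i j => P i j with hMf
  have hMfmap : ∀ t : ℂ, Mf.map (⇑(Polynomial.evalRingHom t))
      = (f t : Matrix (Fin n) (Fin n) ℂ) := by
    intro t
    ext i j
    simp [hMf, Matrix.map_apply, hP t i j]
  have hregψ : SLRegular ψ := by
    apply reg ((Mf.adjugate) * ((1 : Matrix (Fin n) (Fin n) (Polynomial ℂ)) +
      Matrix.single iN i0 Polynomial.X)) ψ iN i0
    intro X
    rw [show (ψ X : Matrix (Fin n) (Fin n) ℂ) = (X : Matrix (Fin n) (Fin n) ℂ) *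
      (((f (x X))⁻¹ : SL n) : Matrix (Fin n) (Fin n) ℂ) * (Esl (x X) : Matrix (Fin n) (Fin n) ℂ)
        from by rw [hψ]; rw [Matrix.SpecialLinearGroup.coe_mul, Matrix.SpecialLinearGroup.coe_mul]]
    rw [← Polynomial.coe_evalRingHom, Matrix.map_mul, mul_assoc]
    congr 1
    congr 1
    · rw [Matrix.SpecialLinearGroup.coe_inv, ← hMfmap (x X),
        show Mf.map ⇑(Polynomial.evalRingHom (x X))
          = (Polynomial.evalRingHom (x X)).mapMatrix Mf from rfl,
        ← RingHom.map_adjugate]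
      rfl
    · rw [Polynomial.coe_evalRingHom, map_one_add_std, hEcoe, Polynomial.eval_X]
  have hregψ' : SLRegular ψ' := by
    apply reg ((((1 : Matrix (Fin n) (Fin n) (Polynomial ℂ)) +
      Matrix.single iN i0 (-Polynomial.X : Polynomial ℂ))) * Mf) ψ' iN i0
    intro X
    rw [show (ψ' X : Matrix (Fin n) (Fin n) ℂ) = (X : Matrix (Fin n) (Fin n) ℂ) *
      (Esl (-(x X)) : Matrix (Fin n) (Fin n) ℂ) * (f (x X) : Matrix (Fin n) (Fin n) ℂ)
        from by rw [hψ']; rw [Matrix.SpecialLinearGroup.coe_mul, Matrix.SpecialLinearGroup.coe_mul]]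
    rw [← Polynomial.coe_evalRingHom, Matrix.map_mul, mul_assoc]
    congr 1
    congr 1
    · rw [Polynomial.coe_evalRingHom, map_one_add_std, hEcoe, Polynomial.eval_neg,
        Polynomial.eval_X]
    · rw [hMfmap]
  refine ⟨ψ, ⟨hregψ, ψ', hregψ', hleft, hright⟩, ?_, ?_⟩
  · intro X
    rw [show (ψ X : Matrix (Fin n) (Fin n) ℂ) = (X : Matrix (Fin n) (Fin n) ℂ) *
      (((f (x X))⁻¹ : SL n) : Matrix (Fin n) (Fin n) ℂ) * (Esl (x X) : Matrix (Fin n) (Fin n) ℂ)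
        from by rw [hψ]; rw [Matrix.SpecialLinearGroup.coe_mul, Matrix.SpecialLinearGroup.coe_mul],
      hEcoe]
  · intro t
    have hxt : x (f t) = t := hcoln t
    rw [show (ψ (f t) : Matrix (Fin n) (Fin n) ℂ) = ((f t * (f (x (f t)))⁻¹ * Esl (x (f t)) : SL n)
      : Matrix (Fin n) (Fin n) ℂ) from rfl, hxt, mul_inv_cancel, one_mul, hEcoe]
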